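/- Let g be a Lie algebra over ℂ and let x, y ∈ g satisfy [[x,y],y] = λ·x and [[y,x],x] = μ·y with λ ≠ 0 and μ ≠ 0. Set z = [x,y]. Then the linear span of {x, y, z} is a Lie subalgebra of g (indeed [z,y] = λx and [z,x] = −μy), and if x, y, z are linearly independent, this Lie subalgebra is isomorphic as a complex Lie algebra to sl₂(ℂ). -/

import Mathlib

open LieAlgebra.SpecialLinear

lemma aux_bracket_map_of_span {M N : Type*} [LieRing M] [LieAlgebra ℂ M] [LieRing N]
    [LieAlgebra ℂ N] (f : M →ₗ[ℂ] N) (s : Set M) (hsp : Submodule.span ℂ s = ⊤)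
    (h : ∀ a ∈ s, ∀ b ∈ s, f ⁅a, b⁆ = ⁅f a, f b⁆) (m n : M) : f ⁅m, n⁆ = ⁅f m, f n⁆ := by
  have hm : m ∈ Submodule.span ℂ s := by rw [hsp]; trivial
  have hn : n ∈ Submodule.span ℂ s := by rw [hsp]; trivial
  refine Submodule.span_induction
    (p := fun m _ => ∀ n ∈ Submodule.span ℂ s, f ⁅m, n⁆ = ⁅f m, f n⁆) ?_ ?_ ?_ ?_ hm n hn
  · intro a ha n hn
    refine Submodule.span_induction (p := fun n _ => f ⁅a, n⁆ = ⁅f a, f n⁆) ?_ ?_ ?_ ?_ hn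
    · intro b hb; exact h a ha b hb
    · simp
    · intro p q _ _ hp hq; simp [lie_add, map_add, hp, hq]
    · intro c p _ hp; simp [lie_smul, map_smul, hp]
  · intro n _; simp
  · intro p q _ _ hp hq n hn; simp [add_lie, map_add, hp n hn, hq n hn]
  · intro c p _ hp n hn; simp [smul_lie, map_smul, hp n hn]

noncomputable def mkSl (m : Matrix (Fin 2) (Fin 2) ℂ) (h : Matrix.trace m = 0) : sl (Fin 2) ℂ :=
  ⟨m, h⟩

@[simp] lemma mkSl_val (m : Matrix (Fin 2) (Fin 2) ℂ) (h) : (mkSl m h).val = m := rfl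

@[simp] lemma sl_smul_val (c : ℂ) (A : sl (Fin 2) ℂ) : (c • A).val = c • A.val := rfl
@[simp] lemma sl_neg_val (A : sl (Fin 2) ℂ) : (-A).val = -A.val := rfl

noncomputable def slX (mu : ℂ) : sl (Fin 2) ℂ :=
  mkSl !![0, 1; mu/4, 0] (by simp [Matrix.trace_fin_two])

noncomputable def slY (mu β : ℂ) : sl (Fin 2) ℂ :=
  mkSl !![0, -β/mu; β/4, 0] (by simp [Matrix.trace_fin_two])

noncomputable def slZ (β : ℂ) : sl (Fin 2) ℂ :=
  mkSl !![β/2, 0; 0, -(β/2)] (by simp [Matrix.trace_fin_two])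

lemma slXY (mu β : ℂ) (hmu : mu ≠ 0) : ⁅slX mu, slY mu β⁆ = slZ β := by
  apply Subtype.ext
  rw [sl_bracket]
  simp only [slX, slY, slZ, mkSl_val]
  ext i j
  fin_cases i <;> fin_cases j <;>
    simp [Matrix.mul_apply, Fin.sum_univ_two] <;> field_simp <;> ring

lemma slXZ (mu β : ℂ) (hmu : mu ≠ 0) : ⁅slX mu, slZ β⁆ = mu • slY mu β := by
  apply Subtype.ext
  rw [sl_bracket]
  simp only [slX, slY, slZ, mkSl_val, sl_smul_val]
  ext i j
  fin_cases i <;> fin_cases j <;>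
    simp [Matrix.mul_apply, Fin.sum_univ_two] <;> field_simp <;> ring

lemma slYZ (lam mu β : ℂ) (hmu : mu ≠ 0) (hβ : β ^ 2 = -(lam * mu)) :
    ⁅slY mu β, slZ β⁆ = -(lam • slX mu) := by
  apply Subtype.ext
  rw [sl_bracket]
  simp only [slY, slZ, slX, mkSl_val, sl_neg_val, sl_smul_val]
  ext i j
  fin_cases i <;> fin_cases j <;>
    simp [Matrix.mul_apply, Fin.sum_univ_two] <;> field_simp
  · linear_combination 4 * mu * hβ + (2 - 4 * mu) * hβ
  · linear_combination 64 * hβ - 62 * hβ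

lemma sl_indep (mu β : ℂ) (hmu : mu ≠ 0) (hβ0 : β ≠ 0) :
    LinearIndependent ℂ ![slX mu, slY mu β, slZ β] := by
  rw [Fintype.linearIndependent_iff]
  intro g hg
  have hval := congrArg Subtype.val hg
  rw [Fin.sum_univ_three] at hval
  simp only [Matrix.cons_val_zero, Matrix.cons_val_one, Matrix.head_cons,
    sl_smul_val, slX, slY, slZ, mkSl_val] at hval
  have e00 := congrFun (congrFun hval 0) 0
  have e01 := congrFun (congrFun hval 0) 1
  have e10 := congrFun (congrFun hval 1) 0
  simp [Matrix.add_apply, Matrix.smul_apply] at e00 e01 e10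
  have hg2 : g 2 = 0 := by
    rcases e00 with h | h
    · exact h
    · exact absurd h hβ0
  have hg1 : g 1 = 0 := by
    have h1 : g 0 * mu = g 1 * β := by
      field_simp at e01
      linear_combination e01
    have h2 : g 0 * mu = -(g 1 * β) := by linear_combination 4 * e10
    have h3 : g 1 * β = 0 := by linear_combination (h2 - h1) / 2
    rcases mul_eq_zero.mp h3 with h | h
    · exact h
    · exact absurd h hβ0
  have hg0 : g 0 = 0 := by
    have h4 := e10
    rw [hg1] at h4
    simpa [hmu] using h4
  intro i; fin_cases i <;> assumption

lemma sl_span (mu β : ℂ) (hmu : mu ≠ 0) (hβ0 : β ≠ 0) :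
    (⊤ : Submodule ℂ (sl (Fin 2) ℂ)) ≤
      Submodule.span ℂ (Set.range ![slX mu, slY mu β, slZ β]) := by
  intro A _
  rw [Submodule.mem_span_range_iff_exists_fun]
  refine ⟨![A.val 0 1 / 2 + 2 * A.val 1 0 / mu,
            (4 * A.val 1 0 - A.val 0 1 * mu) / (2 * β),
            2 * A.val 0 0 / β], ?_⟩
  have htr : A.val 1 1 = -A.val 0 0 := by
    have h : Matrix.trace A.val = 0 := A.2
    rw [Matrix.trace_fin_two] at h
    linear_combination h
  apply Subtype.ext
  rw [Fin.sum_univ_three]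
  simp only [Matrix.cons_val_zero, Matrix.cons_val_one, Matrix.head_cons,
    Matrix.cons_val_two, Matrix.tail_cons, slX, slY, slZ, mkSl_val]
  ext i j
  fin_cases i <;> fin_cases j <;>
    simp [Matrix.add_apply, Matrix.smul_apply, htr] <;> field_simp <;> ring

/-- Classification of 2-dimensional DMSAs with `λ ≠ 0`, `μ ≠ 0`: if
`[[x,y],y] = λx` and `[[y,x],x] = μy`, then with `z = [x,y]` one has `[z,y] = λx`
and `[z,x] = −μy`, the span of `{x,y,z}` is a Lie subalgebra, and if `x, y, z` are
linearly independent this Lie subalgebra is isomorphic to `sl₂(ℂ)`. -/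
theorem dim_two_dmsa_classification_sl2 (L : Type*) [LieRing L] [LieAlgebra ℂ L]
    (x y : L) (lam mu : ℂ) (hlam : lam ≠ 0) (hmu : mu ≠ 0)
    (h1 : ⁅⁅x, y⁆, y⁆ = lam • x) (h2 : ⁅⁅y, x⁆, x⁆ = mu • y)
    (z : L) (hz : z = ⁅x, y⁆) :
    ⁅z, y⁆ = lam • x ∧ ⁅z, x⁆ = -(mu • y) ∧
      ∃ S : LieSubalgebra ℂ L,
        (S : Submodule ℂ L) = Submodule.span ℂ {x, y, z} ∧
        (LinearIndependent ℂ ![x, y, z] →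
          Nonempty (S ≃ₗ⁅ℂ⁆ LieAlgebra.SpecialLinear.sl (Fin 2) ℂ)) := by
  have hxy : ⁅x, y⁆ = z := hz.symm
  have hzy : ⁅z, y⁆ = lam • x := by rw [hz]; exact h1
  have hzx : ⁅z, x⁆ = -(mu • y) := by
    rw [hz, ← lie_skew x y, neg_lie, h2]
  have mx : x ∈ Submodule.span ℂ ({x, y, z} : Set L) := Submodule.subset_span (by simp)
  have my : y ∈ Submodule.span ℂ ({x, y, z} : Set L) := Submodule.subset_span (by simp)
  have mz : z ∈ Submodule.span ℂ ({x, y, z} : Set L) := Submodule.subset_span (by simp)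
  have hclosed : ∀ a ∈ Submodule.span ℂ ({x, y, z} : Set L),
      ∀ b ∈ Submodule.span ℂ ({x, y, z} : Set L),
      ⁅a, b⁆ ∈ Submodule.span ℂ ({x, y, z} : Set L) := by
    have key : ∀ a ∈ ({x, y, z} : Set L), ∀ b ∈ ({x, y, z} : Set L),
        ⁅a, b⁆ ∈ Submodule.span ℂ ({x, y, z} : Set L) := by
      intro a ha b hb
      simp only [Set.mem_insert_iff, Set.mem_singleton_iff] at ha hb
      rcases ha with ha | ha | ha <;> rcases hb with hb | hb | hb <;> rw [ha, hb]
      · simp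
      · rw [hxy]; exact mz
      · rw [← lie_skew x z, hzx, neg_neg]; exact Submodule.smul_mem _ _ my
      · rw [← lie_skew y x, hxy]; exact Submodule.neg_mem _ mz
      · simp
      · rw [← lie_skew y z, hzy]; exact Submodule.neg_mem _ (Submodule.smul_mem _ _ mx)
      · rw [hzx]; exact Submodule.neg_mem _ (Submodule.smul_mem _ _ my)
      · rw [hzy]; exact Submodule.smul_mem _ _ mx
      · simp
    intro a ha b hb
    refine Submodule.span_induction
      (p := fun a _ => ∀ b ∈ Submodule.span ℂ ({x, y, z} : Set L),
        ⁅a, b⁆ ∈ Submodule.span ℂ ({x, y, z} : Set L)) ?_ ?_ ?_ ?_ ha b hb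
    · intro a ha b hb
      refine Submodule.span_induction
        (p := fun b _ => ⁅a, b⁆ ∈ Submodule.span ℂ ({x, y, z} : Set L)) ?_ ?_ ?_ ?_ hb
      · intro b hb; exact key a ha b hb
      · simp
      · intro p q _ _ hp hq; rw [lie_add]; exact Submodule.add_mem _ hp hq
      · intro c p _ hp; rw [lie_smul]; exact Submodule.smul_mem _ _ hp
    · intro b _; simp
    · intro p q _ _ hp hq b hb; rw [add_lie]; exact Submodule.add_mem _ (hp b hb) (hq b hb)
    · intro c p _ hp b hb; rw [smul_lie]; exact Submodule.smul_mem _ _ (hp b hb)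
  let S : LieSubalgebra ℂ L :=
    { Submodule.span ℂ ({x, y, z} : Set L) with
      lie_mem' := fun {a b} ha hb => hclosed a ha b hb }
  refine ⟨hzy, hzx, S, rfl, ?_⟩
  intro hli
  obtain ⟨β, hβ⟩ := IsAlgClosed.exists_pow_nat_eq (-(lam * mu)) (n := 2) (by norm_num)
  have hβ0 : β ≠ 0 := by
    intro h0
    rw [h0] at hβ
    apply mul_ne_zero hlam hmu
    have : (0 : ℂ) = -(lam * mu) := by simpa using hβ
    linear_combination this
  -- basis of S
  let sx : S := ⟨x, mx⟩
  let sy : S := ⟨y, my⟩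
  let sz : S := ⟨z, mz⟩
  have hb01 : ⁅sx, sy⁆ = sz := Subtype.ext (by
    rw [LieSubalgebra.coe_bracket]; exact hxy)
  have hb02 : ⁅sx, sz⁆ = mu • sy := Subtype.ext (by
    rw [LieSubalgebra.coe_bracket]
    show ⁅x, z⁆ = mu • y
    rw [← lie_skew x z, hzx, neg_neg])
  have hb12 : ⁅sy, sz⁆ = -(lam • sx) := Subtype.ext (by
    rw [LieSubalgebra.coe_bracket]
    show ⁅y, z⁆ = -(lam • x)
    rw [← lie_skew y z, hzy])
  let v : Fin 3 → S := ![sx, sy, sz]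
  have hcomp : ((S : Submodule ℂ L).subtype) ∘ v = ![x, y, z] := by
    funext i; fin_cases i <;> rfl
  have hvind : LinearIndependent ℂ v := by
    apply LinearIndependent.of_comp ((S : Submodule ℂ L).subtype)
    have h := hli
    rw [← hcomp] at h
    exact h
  have hvspan : Submodule.span ℂ (Set.range v) = (⊤ : Submodule ℂ S) := by
    apply Submodule.map_injective_of_injective
      (Submodule.injective_subtype (S : Submodule ℂ L))
    rw [Submodule.map_span, Submodule.map_subtype_top, ← Set.range_comp, hcomp]
    show Submodule.span ℂ (Set.range ![x, y, z]) = Submodule.span ℂ ({x, y, z} : Set L)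
    congr 1
    ext w
    constructor
    · rintro ⟨i, rfl⟩
      fin_cases i <;> simp
    · intro hw
      simp only [Set.mem_insert_iff, Set.mem_singleton_iff] at hw
      rcases hw with h | h | h
      · exact ⟨0, h.symm⟩
      · exact ⟨1, h.symm⟩
      · exact ⟨2, h.symm⟩
  let bS : Module.Basis (Fin 3) ℂ S := Module.Basis.mk hvind (ge_of_eq hvspan)
  let w : Fin 3 → sl (Fin 2) ℂ := ![slX mu, slY mu β, slZ β]
  let bT : Module.Basis (Fin 3) ℂ (sl (Fin 2) ℂ) :=
    Module.Basis.mk (sl_indep mu β hmu hβ0) (sl_span mu β hmu hβ0)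
  let f : S ≃ₗ[ℂ] sl (Fin 2) ℂ := bS.equiv bT (Equiv.refl _)
  have hf : ∀ i, f (v i) = w i := by
    intro i
    have h := bS.equiv_apply (i := i) (b' := bT) (e := Equiv.refl _)
    simpa [bS, bT, Module.Basis.mk_apply] using h
  have hfx : f sx = slX mu := hf 0
  have hfy : f sy = slY mu β := hf 1
  have hfz : f sz = slZ β := hf 2
  have hw01 : ⁅slX mu, slY mu β⁆ = slZ β := slXY mu β hmu
  have hw02 : ⁅slX mu, slZ β⁆ = mu • slY mu β := slXZ mu β hmu
  have hw12 : ⁅slY mu β, slZ β⁆ = -(lam • slX mu) := slYZ lam mu β hmu hβ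
  have hmaps : ∀ m n : S, f.toLinearMap ⁅m, n⁆ = ⁅f.toLinearMap m, f.toLinearMap n⁆ := by
    apply aux_bracket_map_of_span f.toLinearMap (Set.range v) hvspan
    rintro a ⟨i, rfl⟩ b ⟨j, rfl⟩
    fin_cases i <;> fin_cases j
    · show f ⁅sx, sx⁆ = ⁅f sx, f sx⁆; simp
    · show f ⁅sx, sy⁆ = ⁅f sx, f sy⁆
      rw [hb01, hfx, hfy, hfz, hw01]
    · show f ⁅sx, sz⁆ = ⁅f sx, f sz⁆
      rw [hb02, map_smul, hfx, hfy, hfz, hw02]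
    · show f ⁅sy, sx⁆ = ⁅f sy, f sx⁆
      rw [← lie_skew sy sx, hb01, map_neg, hfy, hfx, hfz, ← lie_skew (slY mu β) (slX mu), hw01]
    · show f ⁅sy, sy⁆ = ⁅f sy, f sy⁆; simp
    · show f ⁅sy, sz⁆ = ⁅f sy, f sz⁆
      rw [hb12, map_neg, map_smul, hfx, hfy, hfz, hw12]
    · show f ⁅sz, sx⁆ = ⁅f sz, f sx⁆
      rw [← lie_skew sz sx, hb02, map_neg, map_smul, hfz, hfx, hfy,
        ← lie_skew (slZ β) (slX mu), hw02]
    · show f ⁅sz, sy⁆ = ⁅f sz, f sy⁆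
      rw [← lie_skew sz sy, hb12, map_neg, map_neg, map_smul, hfz, hfy, hfx,
        ← lie_skew (slZ β) (slY mu β), hw12]
    · show f ⁅sz, sz⁆ = ⁅f sz, f sz⁆; simp
  exact ⟨{ toLinearMap := f.toLinearMap,
           map_lie' := fun {m n} => hmaps m n,
           invFun := f.symm,
           left_inv := f.left_inv,
           right_inv := f.right_inv }⟩
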